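/- arXiv:2401.02064 — 2 statements merged into one kernel-verified Lean document; each statement's English description precedes it below -/
import Mathlib

section
/- Let k be a field, T_dg a pretriangulated dg category with T = H^0(T_dg), and K an extension-closed full dg subcategory of T_dg such that the inherited exact structure on H^0(K) is Frobenius. Let P be the full dg subcategory of K consisting of the projective objects and let I ⊆ P be an additive full dg subcategory which is covariantly finite in T. Assume P is connective. Then the triple (K,P,I) is d-precluster tilting for every d ≥ 0; in particular Hom_T(Q, Σ^i K) = 0 and Hom_T(K, Σ^i Q) = 0 for every i ≥ 1, Q ∈ P and K ∈ K. -/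
open CategoryTheory Category Limits Pretriangulated ZeroObject

universe v u

namespace PaperIS

variable {C : Type u} [Category.{v} C] [Preadditive C] [HasZeroObject C]
  [HasShift C ℤ] [∀ n : ℤ, (CategoryTheory.shiftFunctor C n).Additive] [Pretriangulated C]
  [HasBinaryBiproducts C]

/-- The extension subcategory `X * Y` of a pretriangulated category. -/
def Star (X Y : Set C) : Set C :=
  {Z | ∃ A ∈ X, ∃ B ∈ Y, ∃ (f : A ⟶ Z) (g : Z ⟶ B) (h : B ⟶ A⟦(1:ℤ)⟧),
    Triangle.mk f g h ∈ distTriang C}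

/-- The class of objects isomorphic to an `n`-fold shift of an object of `S`. -/
def shiftSet (S : Set C) (n : ℤ) : Set C :=
  {Z | ∃ A ∈ S, Nonempty (Z ≅ A⟦n⟧)}

/-- `iterStar S n` is `S * ΣS * ⋯ * Σ^n S`. -/
def iterStar (S : Set C) : ℕ → Set C
  | 0 => S
  | n + 1 => Star (iterStar S n) (shiftSet S ((n : ℤ) + 1))

/-- `ker Ext^{≥1}(-, I)`. -/
def extPerp (I : Set C) : Set C :=
  {X | ∀ n : ℤ, 1 ≤ n → ∀ Y ∈ I, ∀ f : X ⟶ Y⟦n⟧, f = 0}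

/-- The subcategory `B^{(n)}_{K,P,I} = (K * ΣK * ⋯ * Σ^n K) ∩ ker Ext^{≥1}(-, I)`. -/
def Bcat (K I : Set C) (n : ℕ) : Set C := iterStar K n ∩ extPerp I

/-- `H^0(I)` is covariantly finite in `H^0(S)`: every object of `S` admits a left
`I`-approximation. -/
def CovFinite (I S : Set C) : Prop :=
  ∀ X ∈ S, ∃ I₀ ∈ I, ∃ f : X ⟶ I₀, ∀ I₁ ∈ I, ∀ g : X ⟶ I₁, ∃ h : I₀ ⟶ I₁, f ≫ h = g

/-- A class of objects is an additive subcategory if it is closed under isomorphisms,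
finite direct sums and direct summands. -/
structure IsAdditiveSub (S : Set C) : Prop where
  isoClosed : ∀ {X Y : C}, (X ≅ Y) → X ∈ S → Y ∈ S
  zeroMem : (0 : C) ∈ S
  sumMem : ∀ {X Y : C}, X ∈ S → Y ∈ S → (X ⊞ Y) ∈ S
  summandMem : ∀ {X Y : C}, (X ⊞ Y) ∈ S → X ∈ S

/-- Closure of `S` under kernels of retractions (= direct summands, up to isomorphism). -/
def retractClosure (S : Set C) : Set C :=
  {X | ∃ Y : C, ∃ Z ∈ S, Nonempty ((X ⊞ Y) ≅ Z)}

/-- `Q` is a projective object of the extriangulated category `H^0(B)`. -/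
def IsProjIn (B : Set C) (Q : C) : Prop :=
  Q ∈ B ∧ ∀ Y ∈ B, ∀ f : Q ⟶ Y⟦(1:ℤ)⟧, f = 0

/-- `Q` is an injective object of the extriangulated category `H^0(B)`. -/
def IsInjIn (B : Set C) (Q : C) : Prop :=
  Q ∈ B ∧ ∀ Y ∈ B, ∀ f : Y ⟶ Q⟦(1:ℤ)⟧, f = 0

/-- The extriangulated category `H^0(B)` has enough projectives. -/
def HasEnoughProjIn (B : Set C) : Prop :=
  ∀ X ∈ B, ∃ Q X₁ : C, IsProjIn B Q ∧ X₁ ∈ B ∧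
    ∃ (f : X₁ ⟶ Q) (g : Q ⟶ X) (h : X ⟶ X₁⟦(1:ℤ)⟧), Triangle.mk f g h ∈ distTriang C

/-- The extriangulated category `H^0(B)` has enough injectives. -/
def HasEnoughInjIn (B : Set C) : Prop :=
  ∀ X ∈ B, ∃ Q X₁ : C, IsInjIn B Q ∧ X₁ ∈ B ∧
    ∃ (f : X ⟶ Q) (g : Q ⟶ X₁) (h : X₁ ⟶ X⟦(1:ℤ)⟧), Triangle.mk f g h ∈ distTriang C

/-- The extriangulated category `H^0(B)` has dominant dimension `≥ n`: every projective
admits `n` successive conflations with projective-injective middle terms. -/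
def DomDimGE (B : Set C) (n : ℕ) : Prop :=
  ∀ Q : C, IsProjIn B Q → ∃ Ys : ℕ → C, Ys 0 = Q ∧
    ∀ k < n, Ys k ∈ B ∧ Ys (k+1) ∈ B ∧ ∃ Ik : C, IsProjIn B Ik ∧ IsInjIn B Ik ∧
      ∃ (f : Ys k ⟶ Ik) (g : Ik ⟶ Ys (k+1)) (h : Ys (k+1) ⟶ (Ys k)⟦(1:ℤ)⟧),
        Triangle.mk f g h ∈ distTriang C

/-- The extriangulated category `H^0(B)` is `d`-minimal Auslander--Gorenstein. -/
def IsDMinAG (B : Set C) (d : ℕ) : Prop :=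
  HasEnoughProjIn B ∧
  (∀ Q : C, IsProjIn B Q → ∀ X ∈ B, ∀ f : X ⟶ Q⟦(d + 2 : ℤ)⟧, f = 0) ∧
  DomDimGE B (d+1)

/-- A `d`-precluster tilting triple `(K, P, I)`, formulated inside the ambient
pretriangulated category `C`, which plays the role of `pretr(K)`. -/
structure PreclusterTriple (C : Type u) [Category.{v} C] [Preadditive C] [HasZeroObject C]
    [HasShift C ℤ] [∀ n : ℤ, (CategoryTheory.shiftFunctor C n).Additive] [Pretriangulated C]
    [HasBinaryBiproducts C] (d : ℕ) where
  K : Set C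
  P : Set C
  I : Set C
  I_sub_P : I ⊆ P
  P_sub_K : P ⊆ K
  addK : IsAdditiveSub K
  addP : IsAdditiveSub P
  addI : IsAdditiveSub I
  /-- (1) `P` is connective. -/
  connP : ∀ X ∈ P, ∀ Y ∈ P, ∀ n : ℤ, 1 ≤ n → ∀ f : X ⟶ Y⟦n⟧, f = 0
  /-- (2) `H^0(I)` is covariantly finite in `H^0(B^{(d)}_{K,P,I})`. -/
  covFin : CovFinite I (Bcat K I d)
  /-- (3) `K` is extension-closed in `tr(K)`. -/
  extClosedK : Star K K ⊆ K
  /-- (4) `Hom(P, Σ^{≥1} K) = 0`. -/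
  vanishPK : ∀ X ∈ P, ∀ Y ∈ K, ∀ n : ℤ, 1 ≤ n → ∀ f : X ⟶ Y⟦n⟧, f = 0
  /-- (4) `Hom(K, Σ^{≥1} P) = 0`. -/
  vanishKP : ∀ X ∈ K, ∀ Y ∈ P, ∀ n : ℤ, 1 ≤ n → ∀ f : X ⟶ Y⟦n⟧, f = 0
  /-- (5) every object of `K` is the cone of a map `K' → P` with `P ∈ P`, `K' ∈ K`. -/
  resolve : ∀ K0 ∈ K, ∃ K' ∈ K, ∃ P0 ∈ P, ∃ (f : K' ⟶ P0) (g : P0 ⟶ K0)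
    (h : K0 ⟶ K'⟦(1:ℤ)⟧), Triangle.mk f g h ∈ distTriang C

end PaperIS

namespace PaperIS

variable {C : Type u} [Category.{v} C] [Preadditive C] [HasZeroObject C]
  [HasShift C ℤ] [∀ n : ℤ, (CategoryTheory.shiftFunctor C n).Additive] [Pretriangulated C]
  [HasBinaryBiproducts C]

/-- The projective objects of the extriangulated category `H^0(B)`. -/
def projSet (B : Set C) : Set C := {X | IsProjIn B X}

/-- The projective-injective objects of the extriangulated category `H^0(B)`. -/
def projInjSet (B : Set C) : Set C := {X | IsProjIn B X ∧ IsInjIn B X}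

/-- The objects of the ambient category which are `(d+1)`-st syzygies of objects of `A`,
i.e. final terms of `d+1` successive triangles `X_{i+1} → P_i → X_i → ΣX_{i+1}` coming
from conflations of `A` with `P_i ∈ P`. -/
def SyzygySet (A P : Set C) (d : ℕ) : Set C :=
  {X | ∃ Xs Ps : ℕ → C, Xs 0 ∈ A ∧ Nonempty (X ≅ Xs (d+1)) ∧
    ∀ i ≤ d, Ps i ∈ P ∧ Xs i ∈ A ∧ Xs (i+1) ∈ A ∧
      ∃ (f : Xs (i+1) ⟶ Ps i) (g : Ps i ⟶ Xs i) (h : Xs i ⟶ (Xs (i+1))⟦(1:ℤ)⟧),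
        Triangle.mk f g h ∈ distTriang C}

end PaperIS

namespace PaperIS

variable {C : Type u} [Category.{v} C] [Preadditive C] [HasZeroObject C]
  [HasShift C ℤ] [∀ n : ℤ, (CategoryTheory.shiftFunctor C n).Additive] [Pretriangulated C]
  [HasBinaryBiproducts C]

/-- The extriangulated category `H^0(K)` (inherited from the ambient triangulated
category) is Frobenius: enough projectives, enough injectives, and the projectives
coincide with the injectives. -/
def IsFrobeniusIn (B : Set C) : Prop :=
  HasEnoughProjIn B ∧ HasEnoughInjIn B ∧ ∀ X : C, IsProjIn B X ↔ IsInjIn B X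

/-- The key vanishing lemma: in a Frobenius extension-closed subcategory with connective
projectives, all positive-degree homs between projectives and objects of the subcategory
vanish (in both directions). -/
lemma vanish_main (Kset : Set C) (hFrob : IsFrobeniusIn Kset)
    (hPconn : ∀ X ∈ projSet Kset, ∀ Y ∈ projSet Kset, ∀ n : ℤ, 1 ≤ n →
      ∀ f : X ⟶ Y⟦n⟧, f = 0) :
    ∀ n : ℤ, 1 ≤ n → ∀ Q, IsProjIn Kset Q → ∀ K0 ∈ Kset,
      (∀ f : Q ⟶ K0⟦n⟧, f = 0) ∧ (∀ f : K0 ⟶ Q⟦n⟧, f = 0) := by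
  intro n
  refine Int.le_induction (m := 1)
    (motive := fun n _ => ∀ Q, IsProjIn Kset Q → ∀ K0 ∈ Kset,
      (∀ f : Q ⟶ K0⟦n⟧, f = 0) ∧ (∀ f : K0 ⟶ Q⟦n⟧, f = 0)) ?_ ?_ n
  · intro Q hQ K0 hK0
    exact ⟨fun f => hQ.2 K0 hK0 f, fun f => ((hFrob.2.2 Q).mp hQ).2 K0 hK0 f⟩
  · intro n hn IH
    intro Q hQ K0 hK0
    constructor
    · intro f
      obtain ⟨Q', K₁, hQ'inj, hK₁, a, b, c, hT⟩ := hFrob.2.1 K0 hK0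
      have hQ'proj : IsProjIn Kset Q' := (hFrob.2.2 Q').mpr hQ'inj
      have hT' := Triangle.shift_distinguished (Triangle.mk a b c) hT n
      have e := shiftFunctorAdd' C n 1 (n+1) rfl
      set f' : Q ⟶ K0⟦n⟧⟦(1:ℤ)⟧ := f ≫ e.hom.app K0 with hf'def
      have hfa : f' ≫ (a⟦n⟧')⟦(1:ℤ)⟧' = 0 := by
        have hnat := e.hom.naturality a
        simp only [Functor.comp_map] at hnat
        have h0 : f ≫ a⟦n+1⟧' = 0 := hPconn Q hQ Q' hQ'proj (n+1) (by omega) _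
        rw [hf'def, assoc, ← hnat, ← assoc, h0, zero_comp]
      have hf : f' ≫ ((Triangle.shiftFunctor C n).obj (Triangle.mk a b c)).mor₁⟦(1:ℤ)⟧'
          = 0 := by
        dsimp [Triangle.shiftFunctor, Triangle.mk_mor₁]
        change f' ≫ ((n.negOnePow : ℤ) • a⟦n⟧')⟦(1:ℤ)⟧' = 0
        rw [Functor.map_zsmul, Preadditive.comp_zsmul, hfa, smul_zero]
      obtain ⟨g, hg⟩ := Triangle.coyoneda_exact₁ _ hT' f' hf
      have hg0 : g = 0 := (IH Q hQ K₁ hK₁).1 g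
      have hf'0 : f' = 0 := by rw [hg, hg0, zero_comp]; rfl
      have hrec : f = f' ≫ e.inv.app K0 := by
        rw [hf'def, assoc, Iso.hom_inv_id_app, comp_id]
      rw [hrec, hf'0, zero_comp]
    · intro f
      obtain ⟨Q', K₁, hQ'proj, hK₁, a, b, c, hT⟩ := hFrob.1 K0 hK0
      have hbf : (Triangle.mk a b c).mor₂ ≫ f = 0 :=
        hPconn Q' hQ'proj Q hQ (n+1) (by omega) _
      obtain ⟨g, hg⟩ := Triangle.yoneda_exact₃ _ hT f hbf
      have hg0 : g = 0 := by
        have u := shiftFunctorCompIsoId C (1:ℤ) (-1) (by ring)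
        have v := shiftFunctorAdd' C (n+1) (-1) n (by ring)
        have h0 : u.inv.app K₁ ≫ g⟦(-1:ℤ)⟧' ≫ v.inv.app Q = 0 :=
          (IH Q hQ K₁ hK₁).2 _
        have h1 : g⟦(-1:ℤ)⟧' = 0 := by
          have h2 : u.inv.app K₁ ≫ (g⟦(-1:ℤ)⟧' ≫ v.inv.app Q) = u.inv.app K₁ ≫ 0 := by
            rw [h0, comp_zero]
          rw [← cancel_mono (v.inv.app Q), zero_comp]
          exact (cancel_epi (u.inv.app K₁)).1 h2
        apply (shiftFunctor C (-1:ℤ)).map_injective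
        rw [h1, Functor.map_zero]
      rw [hg, hg0, comp_zero]; rfl

/-- Let `T_dg` be a pretriangulated dg category (modelled by the ambient
pretriangulated category `C`) and `K` an extension-closed additive subcategory whose
inherited exact structure is Frobenius.  Let `P` be the projectives of `K` and `I ⊆ P` an
additive subcategory which is covariantly finite in `T = H^0(T_dg)`.  If `P` is
connective then `(K,P,I)` is a `d`-precluster tilting triple for every `d ≥ 0`; in
particular `Hom_T(Q, Σ^i K₀) = 0` and `Hom_T(K₀, Σ^i Q) = 0` for all `i ≥ 1`, `Q ∈ P`,
`K₀ ∈ K`. -/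
theorem statement9 (Kset : Set C) (haddK : IsAdditiveSub Kset)
    (hext : Star Kset Kset ⊆ Kset) (hFrob : IsFrobeniusIn Kset)
    (Iset : Set C) (haddI : IsAdditiveSub Iset) (hIP : Iset ⊆ projSet Kset)
    (hIcov : CovFinite Iset (Set.univ : Set C))
    (hPconn : ∀ X ∈ projSet Kset, ∀ Y ∈ projSet Kset, ∀ n : ℤ, 1 ≤ n →
      ∀ f : X ⟶ Y⟦n⟧, f = 0) :
    (∀ d : ℕ, ∃ T : PreclusterTriple C d,
      T.K = Kset ∧ T.P = projSet Kset ∧ T.I = Iset) ∧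
    (∀ n : ℤ, 1 ≤ n → ∀ Q ∈ projSet Kset, ∀ K0 ∈ Kset,
      (∀ f : Q ⟶ K0⟦n⟧, f = 0) ∧ (∀ f : K0 ⟶ Q⟦n⟧, f = 0)) := by
  have hmain := vanish_main Kset hFrob hPconn
  have haddP : IsAdditiveSub (projSet Kset) :=
    { isoClosed := fun {X Y} e hX => by
        refine ⟨haddK.isoClosed e hX.1, fun Z hZ f => ?_⟩
        have h0 : e.hom ≫ f = 0 := hX.2 Z hZ _
        calc f = e.inv ≫ e.hom ≫ f := by simp
        _ = 0 := by rw [h0, comp_zero]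
      zeroMem := ⟨haddK.zeroMem, fun Z _ f => (isZero_zero C).eq_of_src f 0⟩
      sumMem := fun {X Y} hX hY => by
        refine ⟨haddK.sumMem hX.1 hY.1, fun Z hZ f => ?_⟩
        apply biprod.hom_ext'
        · rw [hX.2 Z hZ (biprod.inl ≫ f), comp_zero]
        · rw [hY.2 Z hZ (biprod.inr ≫ f), comp_zero]
      summandMem := fun {X Y} hXY => by
        refine ⟨haddK.summandMem hXY.1, fun Z hZ f => ?_⟩
        have h0 : (biprod.fst : X ⊞ Y ⟶ X) ≫ f = 0 := hXY.2 Z hZ _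
        calc f = biprod.inl ≫ biprod.fst ≫ f := by simp
        _ = 0 := by rw [h0, comp_zero] }
  constructor
  · intro d
    refine ⟨{ K := Kset
              P := projSet Kset
              I := Iset
              I_sub_P := hIP
              P_sub_K := fun Q hQ => hQ.1
              addK := haddK
              addP := haddP
              addI := haddI
              connP := hPconn
              covFin := fun X _ => hIcov X (Set.mem_univ X)
              extClosedK := hext
              vanishPK := fun X hX Y hY n hn => (hmain n hn X hX Y hY).1
              vanishKP := fun X hX Y hY n hn => (hmain n hn Y hY X hX).2
              resolve := ?_ }, rfl, rfl, rfl⟩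
    intro K0 hK0
    obtain ⟨Q, K₁, hQ, hK₁, a, b, c, hT⟩ := hFrob.1 K0 hK0
    exact ⟨K₁, hK₁, Q, hQ, a, b, c, hT⟩
  · exact fun n hn Q hQ K0 hK0 => hmain n hn Q hQ K0 hK0

end PaperIS
end

section
/- Let d ≥ 0 and let (K,P,I) be a d-precluster tilting triple such that B' = τ_{≤0} B^{(d+1)}_{K,P,I} is abelian. Then the dg category P is concentrated in degree zero and has weak kernels, and the map sending X ∈ B' to Hom_{B'}(−,X)|_P extends to an exact equivalence of categories F : B' ≃ mod P. -/
open CategoryTheory Category Limits Pretriangulated ZeroObject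

universe v u

namespace PaperIS

variable {C : Type u} [Category.{v} C] [Preadditive C] [HasZeroObject C]
  [HasShift C ℤ] [∀ n : ℤ, (CategoryTheory.shiftFunctor C n).Additive] [Pretriangulated C]
  [HasBinaryBiproducts C]

/-- A complex `0 → K_{d+1} → P_d → ⋯ → P_1 → P_0` in `H^0(K)` with `K_{d+1} ∈ K` and
`P_i ∈ P` for `i ≤ d`; here `Xs (d+1) = K_{d+1}`, `Xs i = P_i` and `gs i : X_{i+1} → X_i`. -/
structure CxData (K P : Set C) (d : ℕ) where
  Xs : ℕ → C
  gs : ∀ i : ℕ, Xs (i+1) ⟶ Xs i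
  memP : ∀ i ≤ d, Xs i ∈ P
  memK : Xs (d+1) ∈ K
  isCx : ∀ i : ℕ, i + 1 ≤ d → gs (i+1) ≫ gs i = 0

/-- The induced complex `(P_0, I) → (P_1, I) → ⋯ → (P_d, I) → (K_{d+1}, I) → 0` of Hom
spaces is exact for every `I ∈ Iset`. -/
def IExactCx {K P : Set C} {d : ℕ} (Iset : Set C) (E : CxData K P d) : Prop :=
  ∀ I0 ∈ Iset, ∀ i ≤ d, ∀ φ : E.Xs (i+1) ⟶ I0,
    (i + 1 ≤ d → E.gs (i+1) ≫ φ = 0) → ∃ ψ : E.Xs i ⟶ I0, E.gs i ≫ ψ = φ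

/-- The induced complex `0 → (P, K_{d+1}) → (P, P_d) → ⋯ → (P, P_0)` of Hom spaces is
exact for every `P ∈ Pset`. -/
def PExactCx {K P : Set C} {d : ℕ} (Pset : Set C) (E : CxData K P d) : Prop :=
  ∀ Q ∈ Pset,
    (∀ φ : Q ⟶ E.Xs (d+1), φ ≫ E.gs d = 0 → φ = 0) ∧
    (∀ i : ℕ, i + 1 ≤ d → ∀ φ : Q ⟶ E.Xs (i+1), φ ≫ E.gs i = 0 →
      ∃ ψ : Q ⟶ E.Xs (i+2), ψ ≫ E.gs (i+1) = φ)

/-- The dg category with objects `B` (and Hom complexes inherited from the ambient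
pretriangulated dg category) is concentrated in degree zero after truncation `τ_{≤0}`,
i.e. all negative-degree cohomologies of Hom complexes vanish. -/
def ConcentratedDegZero (B : Set C) : Prop :=
  ∀ X ∈ B, ∀ Y ∈ B, ∀ n : ℤ, n < 0 → ∀ f : X ⟶ Y⟦n⟧, f = 0

end PaperIS

namespace PaperIS

variable {C : Type u} [Category.{v} C] [Preadditive C] [HasZeroObject C]
  [HasShift C ℤ] [∀ n : ℤ, (CategoryTheory.shiftFunctor C n).Additive] [Pretriangulated C]
  [HasBinaryBiproducts C]

/-- `f` is a kernel of `g` in the full subcategory on `B`. -/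
def IsKernelIn (B : Set C) {X E Y : C} (f : X ⟶ E) (g : E ⟶ Y) : Prop :=
  f ≫ g = 0 ∧ ∀ W ∈ B, ∀ u : W ⟶ E, u ≫ g = 0 → ∃! v : W ⟶ X, v ≫ f = u

/-- `g` is a cokernel of `f` in the full subcategory on `B`. -/
def IsCokernelIn (B : Set C) {X E Y : C} (f : X ⟶ E) (g : E ⟶ Y) : Prop :=
  f ≫ g = 0 ∧ ∀ W ∈ B, ∀ u : E ⟶ W, f ≫ u = 0 → ∃! v : Y ⟶ W, g ≫ v = u

/-- The exact dg category `τ_{≤0} B` (for `B` extension-closed in the ambient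
pretriangulated category) is an abelian category, with all kernel-cokernel pairs as
conflations: it is concentrated in degree zero, the full subcategory on `B` is abelian,
every kernel-cokernel pair in it extends to a triangle of the ambient category (i.e. is a
conflation), and conversely every conflation is a kernel-cokernel pair. -/
def AbelianExact (B : Set C) : Prop :=
  ConcentratedDegZero B ∧
  Nonempty (Abelian (ObjectProperty.FullSubcategory fun X : C => X ∈ B)) ∧
  (∀ ⦃X E Y : C⦄, X ∈ B → E ∈ B → Y ∈ B → ∀ (f : X ⟶ E) (g : E ⟶ Y),
    IsKernelIn B f g → IsCokernelIn B f g →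
      ∃ h : Y ⟶ X⟦(1:ℤ)⟧, Triangle.mk f g h ∈ distTriang C) ∧
  (∀ ⦃X E Y : C⦄ (f : X ⟶ E) (g : E ⟶ Y) (h : Y ⟶ X⟦(1:ℤ)⟧),
    X ∈ B → E ∈ B → Y ∈ B → Triangle.mk f g h ∈ (distTriang C) →
      IsKernelIn B f g ∧ IsCokernelIn B f g)

/-- The additive category `H^0(P)` admits weak kernels. -/
def HasWeakKernelsIn (P : Set C) : Prop :=
  ∀ P1 ∈ P, ∀ P0 ∈ P, ∀ f : P1 ⟶ P0, ∃ P2 ∈ P, ∃ w : P2 ⟶ P1, w ≫ f = 0 ∧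
    ∀ Q ∈ P, ∀ u : Q ⟶ P1, u ≫ f = 0 → ∃ v : Q ⟶ P2, v ≫ w = u

end PaperIS

namespace PaperIS

universe w

variable {C : Type u} [Category.{v} C] [Preadditive C] [HasZeroObject C]
  [HasShift C ℤ] [∀ n : ℤ, (CategoryTheory.shiftFunctor C n).Additive] [Pretriangulated C]
  [HasBinaryBiproducts C]

variable (k : Type w) [CommRing k] [Linear k C]

/-- The category `Mod S` of `k`-linear functors `S^op → Mod k` is modelled by the functor
category `(S)ᵒᵖ ⥤ ModuleCat k` on the full subcategory on `S`. -/
abbrev ModCat (S : Set C) := (ObjectProperty.FullSubcategory fun X : C => X ∈ S)ᵒᵖ ⥤ ModuleCat.{v} k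

/-- The restricted Yoneda functor `X ↦ Hom(-, X)|_S`. -/
def resYoneda (S : Set C) : C ⥤ ModCat k S where
  obj X :=
    { obj := fun P0 => ModuleCat.of k (P0.unop.obj ⟶ X)
      map := fun f => ModuleCat.ofHom (Linear.leftComp k X ((ObjectProperty.ι _).map f.unop))
      map_id := fun P0 => by
        ext g; exact Category.id_comp g
      map_comp := fun f g => by
        ext x
        exact Category.assoc ((ObjectProperty.ι _).map g.unop)
          ((ObjectProperty.ι _).map f.unop) x }
  map {X Y} u :=
    { app := fun P0 => ModuleCat.ofHom (Linear.rightComp k P0.unop.obj u)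
      naturality := fun P0 P1 f => by
        ext x
        exact Category.assoc ((ObjectProperty.ι _).map f.unop) x u }
  map_id X := by
    ext P0 x
    exact Category.comp_id x
  map_comp u v := by
    ext P0 x
    exact (Category.assoc x u v).symm

end PaperIS

namespace PaperIS

variable {C : Type u} [Category.{v} C] [Preadditive C] [HasZeroObject C]
  [HasShift C ℤ] [∀ n : ℤ, (CategoryTheory.shiftFunctor C n).Additive] [Pretriangulated C]
  [HasBinaryBiproducts C]

variable (k : Type w) [CommRing k] [Linear k C]

/-- The morphisms `ι`, `π` of `Mod S` form a short exact sequence (pointwise). -/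
def PtwiseSES {S : Set C} {G₁ G₂ G₃ : ModCat k S} (ι : G₁ ⟶ G₂) (π : G₂ ⟶ G₃) : Prop :=
  ∀ P0, Function.Injective (ι.app P0) ∧ Function.Surjective (π.app P0) ∧
    ∀ y, (π.app P0) y = 0 → ∃ x, (ι.app P0) x = y

/-- A right `S`-module is finitely presented if it admits a presentation by
representable modules. -/
def IsFinitelyPresented (S : Set C) (G : ModCat k S) : Prop :=
  ∃ (P1 P0 : C) (_ : P1 ∈ S) (_ : P0 ∈ S) (f : P1 ⟶ P0)
    (ε : (resYoneda k S).obj P0 ⟶ G),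
    (∀ Q, Function.Surjective (ε.app Q)) ∧
    ∀ Q y, (ε.app Q) y = 0 ↔ ∃ x, (((resYoneda k S).map f).app Q) x = y

end PaperIS

namespace PaperIS

variable {C : Type u} [Category.{v} C] [Preadditive C] [HasZeroObject C]
  [HasShift C ℤ] [∀ n : ℤ, (CategoryTheory.shiftFunctor C n).Additive] [Pretriangulated C]
  [HasBinaryBiproducts C]

variable (k : Type w) [CommRing k] [Linear k C]

section AuxiliaryLemmas

variable (d : ℕ) (T : PreclusterTriple C d)

/-- The full subcategory on `B^{(d+1)}`. -/
abbrev Bsub := ObjectProperty.FullSubcategory fun X : C => X ∈ Bcat T.K T.I (d + 1)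

lemma triangle_id_zero (X : C) (n : ℤ) :
    Triangle.mk (𝟙 X) (0 : X ⟶ (0 : C)⟦n⟧) 0 ∈ distTriang C := by
  refine isomorphic_distinguished _ (contractible_distinguished X) _ ?_
  exact Triangle.isoMk _ _ (Iso.refl _) (Iso.refl _)
    (((shiftFunctor C n).map_isZero (isZero_zero C)).isoZero)
    (by exact (Category.comp_id _).trans (Category.id_comp _).symm)
      (by exact zero_comp.trans comp_zero.symm) (by exact zero_comp.trans comp_zero.symm)

lemma subset_iterStar_succ {S : Set C} (h0 : (0 : C) ∈ S) (n : ℕ) :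
    iterStar S n ⊆ iterStar S (n + 1) := fun X hX =>
  ⟨X, hX, (0 : C)⟦((n : ℤ) + 1)⟧, ⟨0, h0, ⟨Iso.refl _⟩⟩, 𝟙 X, 0, 0, triangle_id_zero X _⟩

lemma K_sub_iterStar (n : ℕ) : T.K ⊆ iterStar T.K n := by
  induction n with
  | zero => exact fun X hX => hX
  | succ n ih => exact fun X hX => subset_iterStar_succ T.addK.zeroMem n (ih hX)

lemma K_sub_B : T.K ⊆ Bcat T.K T.I (d + 1) := fun X hX =>
  ⟨K_sub_iterStar d T _ hX, fun n hn Y hY f => T.vanishKP X hX Y (T.I_sub_P hY) n hn f⟩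

lemma P_sub_B : T.P ⊆ Bcat T.K T.I (d + 1) := fun _ hX => K_sub_B d T (T.P_sub_K hX)

lemma to_shift_shift_zero {Q K₁ : C} (hQ : Q ∈ T.P) (hK : K₁ ∈ T.K) (s t : ℤ)
    (hst : 1 ≤ s + t) (g : Q ⟶ (K₁⟦s⟧)⟦t⟧) : g = 0 := by
  have h1 : g ≫ (shiftFunctorAdd' C s t (s + t) rfl).inv.app K₁ = 0 :=
    T.vanishPK Q hQ K₁ hK (s + t) hst _
  have h2 : g = (g ≫ (shiftFunctorAdd' C s t (s + t) rfl).inv.app K₁) ≫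
      (shiftFunctorAdd' C s t (s + t) rfl).hom.app K₁ := by
    rw [Category.assoc, Iso.inv_hom_id_app]
    exact (Category.comp_id g).symm
  rw [h2, h1, zero_comp]

lemma from_pos_shift_zero (conc : ConcentratedDegZero (Bcat T.K T.I (d + 1))) {W Z : C}
    (hW : W ∈ Bcat T.K T.I (d + 1)) (hZ : Z ∈ Bcat T.K T.I (d + 1)) (s : ℤ) (hs : 1 ≤ s)
    (g : W⟦s⟧ ⟶ Z) : g = 0 := by
  let e : W ≅ (W⟦s⟧)⟦-s⟧ :=
    ((shiftFunctorCompIsoId C s (-s) (add_neg_cancel s)).app W).symm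
  have h1 : e.hom ≫ (shiftFunctor C (-s)).map g = 0 :=
    conc W hW Z hZ (-s) (by omega) _
  have h2 : (shiftFunctor C (-s)).map g = 0 := by
    rw [← Iso.inv_hom_id_assoc e ((shiftFunctor C (-s)).map g), h1, comp_zero]
  exact (shiftFunctor C (-s)).map_injective (by rw [h2, Functor.map_zero])

lemma hom_P_to_iterStar_shift_zero : ∀ (n : ℕ) (X : C), X ∈ iterStar T.K n →
    ∀ Q ∈ T.P, ∀ m : ℤ, 1 ≤ m → ∀ f : Q ⟶ X⟦m⟧, f = 0 := by
  intro n
  induction n with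
  | zero => exact fun X hX Q hQ m hm f => T.vanishPK Q hQ X hX m hm f
  | succ n ih =>
    rintro X ⟨A, hA, Bo, ⟨K₁, hK₁, ⟨e⟩⟩, a, b, h, hT⟩ Q hQ m hm f
    have hT' := Triangle.shift_distinguished _ hT m
    rw [Triangle.shiftFunctor_eq] at hT'
    have hb : f ≫ b⟦m⟧' = 0 := by
      have h1 : (f ≫ b⟦m⟧') ≫ (shiftFunctor C m).map e.hom = 0 :=
        to_shift_shift_zero d T hQ hK₁ ((n : ℤ) + 1) m (by omega) _
      have h2 : f ≫ b⟦m⟧' = ((f ≫ b⟦m⟧') ≫ (shiftFunctor C m).map e.hom) ≫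
          (shiftFunctor C m).map e.inv := by
        rw [Category.assoc, ← Functor.map_comp, e.hom_inv_id]
        simp
      rw [h2, h1, zero_comp]
    obtain ⟨g, hg⟩ := Triangle.coyoneda_exact₂ _ hT' f (by
      show f ≫ (m.negOnePow • b⟦m⟧') = 0
      rw [Linear.comp_units_smul, hb, smul_zero])
    have hg0 : g = 0 := ih A hA Q hQ m hm g
    rw [hg, hg0]; exact zero_comp

lemma exists_coverK (conc : ConcentratedDegZero (Bcat T.K T.I (d + 1))) :
    ∀ (n : ℕ) (X : C), X ∈ iterStar T.K n → ∃ K₀ ∈ T.K, ∃ c : K₀ ⟶ X,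
      (∀ Q ∈ T.P, ∀ u : Q ⟶ X, ∃ q : Q ⟶ K₀, q ≫ c = u) ∧
      (∀ Z ∈ Bcat T.K T.I (d + 1), ∀ ψ : X ⟶ Z, c ≫ ψ = 0 → ψ = 0) := by
  intro n
  induction n with
  | zero =>
    intro X hX
    exact ⟨X, hX, 𝟙 X, fun Q _ u => ⟨u, Category.comp_id u⟩,
      fun Z _ ψ hψ => by rwa [Category.id_comp] at hψ⟩
  | succ n ih =>
    rintro X ⟨A, hA, Bo, ⟨K₁, hK₁, ⟨e⟩⟩, a, b, h, hT⟩
    obtain ⟨K₀, hK₀, cA, hcov, hepi⟩ := ih A hA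
    refine ⟨K₀, hK₀, cA ≫ a, ?_, ?_⟩
    · intro Q hQ u
      have hub : u ≫ b = 0 := by
        have h1 : (u ≫ b) ≫ e.hom = 0 := T.vanishPK Q hQ K₁ hK₁ ((n : ℤ) + 1) (by omega) _
        calc u ≫ b = ((u ≫ b) ≫ e.hom) ≫ e.inv := by
              rw [Category.assoc, e.hom_inv_id, Category.comp_id]
          _ = 0 := by rw [h1, zero_comp]
      obtain ⟨u', hu'⟩ : ∃ u' : Q ⟶ A, u = u' ≫ a := Triangle.coyoneda_exact₂ _ hT u hub
      obtain ⟨q, hq⟩ := hcov Q hQ u'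
      refine ⟨q, ?_⟩
      have hu'' : u' ≫ a = u := hu'.symm
      rw [← Category.assoc, hq, hu'']
    · intro Z hZ ψ hψ
      have haψ : a ≫ ψ = 0 := hepi Z hZ (a ≫ ψ) (by rw [← Category.assoc]; exact hψ)
      obtain ⟨χ, hχ⟩ : ∃ χ : Bo ⟶ Z, ψ = b ≫ χ := Triangle.yoneda_exact₂ _ hT ψ haψ
      have h3 : e.inv ≫ χ = 0 :=
        from_pos_shift_zero d T conc (K_sub_B d T hK₁) hZ ((n : ℤ) + 1) (by omega) _
      have hχ0 : χ = 0 := by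
        calc χ = e.hom ≫ (e.inv ≫ χ) := by rw [e.hom_inv_id_assoc]
          _ = 0 := by rw [h3, comp_zero]
      rw [hχ, hχ0, comp_zero]

lemma exists_coverP (conc : ConcentratedDegZero (Bcat T.K T.I (d + 1))) (X : C)
    (hX : X ∈ iterStar T.K (d + 1)) :
    ∃ P₀ ∈ T.P, ∃ p : P₀ ⟶ X,
      (∀ Q ∈ T.P, ∀ u : Q ⟶ X, ∃ q : Q ⟶ P₀, q ≫ p = u) ∧
      (∀ Z ∈ Bcat T.K T.I (d + 1), ∀ ψ : X ⟶ Z, p ≫ ψ = 0 → ψ = 0) := by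
  obtain ⟨K₀, hK₀, c, hcov, hepi⟩ := exists_coverK d T conc (d + 1) X hX
  obtain ⟨K', hK', P₀, hP₀, f', g', h', hT'⟩ := T.resolve K₀ hK₀
  refine ⟨P₀, hP₀, g' ≫ c, ?_, ?_⟩
  · intro Q hQ u
    obtain ⟨q, hq⟩ := hcov Q hQ u
    have hq3 : q ≫ h' = 0 := T.vanishPK Q hQ K' hK' 1 le_rfl _
    obtain ⟨v, hv⟩ : ∃ v : Q ⟶ P₀, q = v ≫ g' := Triangle.coyoneda_exact₃ _ hT' q hq3
    refine ⟨v, ?_⟩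
    have hv' : v ≫ g' = q := hv.symm
    rw [← Category.assoc, hv', hq]
  · intro Z hZ ψ hψ
    have hcψ : c ≫ ψ = 0 := by
      obtain ⟨χ, hχ⟩ : ∃ χ : K'⟦(1:ℤ)⟧ ⟶ Z, c ≫ ψ = h' ≫ χ :=
        Triangle.yoneda_exact₃ _ hT' (c ≫ ψ) ((Category.assoc g' c ψ).symm.trans hψ)
      rw [hχ, from_pos_shift_zero d T conc (K_sub_B d T hK') hZ 1 le_rfl χ, comp_zero]
    exact hepi Z hZ ψ hcψ

/-- Regard a morphism of `C` as a morphism of the full subcategory on `B`. -/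
def homB {X Y : C} (hX : X ∈ Bcat T.K T.I (d + 1)) (hY : Y ∈ Bcat T.K T.I (d + 1))
    (f : X ⟶ Y) : (⟨X, hX⟩ : Bsub d T) ⟶ ⟨Y, hY⟩ := ObjectProperty.homMk f

/-- Regard a morphism of `C` as a morphism of the full subcategory on `P`. -/
def homP {X Y : C} (hX : X ∈ T.P) (hY : Y ∈ T.P) (f : X ⟶ Y) :
    (⟨X, hX⟩ : ObjectProperty.FullSubcategory fun Z : C => Z ∈ T.P) ⟶ ⟨Y, hY⟩ :=
    ObjectProperty.homMk f

end AuxiliaryLemmas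


set_option maxHeartbeats 1000000 in
/-- Let `(K,P,I)` be a `d`-precluster tilting triple such that
`B' = τ_{≤0} B^{(d+1)}_{K,P,I}` is abelian.  Then `P` is concentrated in degree zero and
has weak kernels, and `X ↦ Hom_{B'}(-,X)|_P` extends to an exact equivalence of
categories `F : B' ≃ mod P` onto the finitely presented right `P`-modules. -/
theorem statement13 (d : ℕ) (T : PreclusterTriple C d)
    (hab : AbelianExact (Bcat T.K T.I (d+1))) :
    -- `P` is concentrated in degree zero
    (∀ X ∈ T.P, ∀ Y ∈ T.P, ∀ n : ℤ, n ≠ 0 → ∀ f : X ⟶ Y⟦n⟧, f = 0) ∧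
    -- `P` has weak kernels
    HasWeakKernelsIn T.P ∧
    -- `F` is an exact equivalence `B' ≃ mod P`
    ∃ e : ObjectProperty.FullSubcategory (fun X : C => X ∈ Bcat T.K T.I (d+1)) ≌
        ObjectProperty.FullSubcategory (IsFinitelyPresented k T.P),
      Nonempty (e.functor ⋙ ObjectProperty.ι _ ≅
        (ObjectProperty.ι fun X : C => X ∈ Bcat T.K T.I (d+1)) ⋙
          resYoneda k T.P) ∧
      (∀ ⦃X E Y : C⦄ (f : X ⟶ E) (g : E ⟶ Y) (h : Y ⟶ X⟦(1:ℤ)⟧),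
        X ∈ Bcat T.K T.I (d+1) → E ∈ Bcat T.K T.I (d+1) → Y ∈ Bcat T.K T.I (d+1) →
        Triangle.mk f g h ∈ (distTriang C) →
          PtwiseSES k ((resYoneda k T.P).map f) ((resYoneda k T.P).map g)) := by
  classical
  obtain ⟨conc, ⟨A⟩, mkTri, ofTri⟩ := hab
  letI := A
  letI := Abelian.nonPreadditiveAbelian (C := Bsub d T)
  letI : HasZeroMorphisms (Bsub d T) :=
    (Abelian.nonPreadditiveAbelian (C := Bsub d T)).toHasZeroMorphisms
  have homEq : ∀ {X Y : Bsub d T} {a b : X ⟶ Y}, a = b → a.hom = b.hom := fun h => h ▸ rfl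
  have zeroAgree : ∀ (X Y : Bsub d T), (0 : X ⟶ Y).hom = 0 := by
    intro X Y
    have h1 : (0 : X ⟶ (0 : Bsub d T)) ≫ (0 : (0 : Bsub d T) ⟶ Y) = (0 : X ⟶ Y) :=
      zero_comp
    have h2 : (0 : X ⟶ (0 : Bsub d T)) = ObjectProperty.homMk 0 :=
      (isZero_zero (Bsub d T)).eq_of_tgt _ _
    rw [← h1, h2, ObjectProperty.FullSubcategory.comp_hom, ObjectProperty.homMk_hom]
    exact zero_comp
  have compZero : ∀ {X Y Z : Bsub d T} (a : X ⟶ Y) (b : Y ⟶ Z),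
      a ≫ b = 0 ↔ a.hom ≫ b.hom = 0 := by
    intro X Y Z a b
    rw [← zeroAgree X Z, ← ObjectProperty.FullSubcategory.comp_hom]
    exact ⟨fun h => by rw [h], fun h => ObjectProperty.hom_ext _ h⟩
  have epiCover : ∀ (Xh : Bsub d T) (P₀ : C) (hP₀ : P₀ ∈ T.P) (p : P₀ ⟶ Xh.obj),
      (∀ Z ∈ Bcat T.K T.I (d + 1), ∀ ψ : Xh.obj ⟶ Z, p ≫ ψ = 0 → ψ = 0) →
      Epi (homB d T (P_sub_B d T hP₀) Xh.2 p) := by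
    intro Xh P₀ hP₀ p hepi
    constructor
    intro W ψ ψ' hcomp
    let ψc : Xh.obj ⟶ W.obj := ψ.hom
    let ψc' : Xh.obj ⟶ W.obj := ψ'.hom
    have h5 : p ≫ ψc = p ≫ ψc' := homEq hcomp
    have hC : p ≫ (ψc - ψc') = 0 := by
      rw [Preadditive.comp_sub, h5, sub_self]
    exact ObjectProperty.hom_ext _ (sub_eq_zero.mp (hepi W.obj W.2 _ hC))
  refine ⟨?_, ?_, ?_⟩
  · -- `P` is concentrated in degree zero
    intro X hX Y hY n hn f
    rcases lt_or_gt_of_ne hn with hneg | hpos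
    · exact conc X (P_sub_B d T hX) Y (P_sub_B d T hY) n hneg f
    · exact T.connP X hX Y hY n (by omega) f
  · -- weak kernels
    intro P1 hP1 P0 hP0 f
    let Ph1 : Bsub d T := ⟨P1, P_sub_B d T hP1⟩
    let Pz0 : Bsub d T := ⟨P0, P_sub_B d T hP0⟩
    let fh : Ph1 ⟶ Pz0 := ObjectProperty.homMk f
    let X₁ := kernel fh
    let k₁ : X₁.obj ⟶ P1 := (kernel.ι fh).hom
    have hk : k₁ ≫ f = 0 := (compZero _ _).mp (kernel.condition fh)
    obtain ⟨P₂, hP₂, p, hcov, _⟩ := exists_coverP d T conc X₁.obj X₁.2.1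
    refine ⟨P₂, hP₂, p ≫ k₁, ?_, ?_⟩
    · rw [Category.assoc, hk, comp_zero]
    · intro Q hQ u hu
      have hu' : homB d T (P_sub_B d T hQ) (P_sub_B d T hP1) u ≫ fh = 0 :=
        (compZero _ _).mpr hu
      obtain ⟨q, hq⟩ := hcov Q hQ
        (kernel.lift fh (homB d T (P_sub_B d T hQ) (P_sub_B d T hP1) u) hu').hom
      refine ⟨q, ?_⟩
      have hlift := kernel.lift_ι fh (homB d T (P_sub_B d T hQ) (P_sub_B d T hP1) u) hu'
      rw [← Category.assoc, hq]
      exact homEq hlift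
  · -- the equivalence
    have fpAll : ∀ Xh : Bsub d T,
        IsFinitelyPresented k T.P
          ((ObjectProperty.ι (fun X : C => X ∈ Bcat T.K T.I (d + 1)) ⋙
            resYoneda k T.P).obj Xh) := by
      intro Xh
      obtain ⟨P₀, hP₀, p, hcov, hepi⟩ := exists_coverP d T conc Xh.obj Xh.2.1
      let Ph0 : Bsub d T := ⟨P₀, P_sub_B d T hP₀⟩
      let ph : Ph0 ⟶ Xh := ObjectProperty.homMk p
      let X₁ := kernel ph
      let k₁ : X₁.obj ⟶ P₀ := (kernel.ι ph).hom
      have hk₁p : k₁ ≫ p = 0 := (compZero _ _).mp (kernel.condition ph)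
      obtain ⟨P₁, hP₁, p₁, hcov₁, _⟩ := exists_coverP d T conc X₁.obj X₁.2.1
      refine ⟨P₁, P₀, hP₁, hP₀, p₁ ≫ k₁, (resYoneda k T.P).map p, ?_, ?_⟩
      · intro Q y
        obtain ⟨q, hq⟩ := hcov Q.unop.obj Q.unop.2 y
        exact ⟨q, hq⟩
      · intro Q y
        constructor
        · intro hy
          have hyp : y ≫ p = 0 := hy
          have hy0 : homB d T (P_sub_B d T Q.unop.2) (P_sub_B d T hP₀) y ≫ ph = 0 :=
            (compZero _ _).mpr hyp
          obtain ⟨x, hx⟩ := hcov₁ Q.unop.obj Q.unop.2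
            (kernel.lift ph (homB d T (P_sub_B d T Q.unop.2) (P_sub_B d T hP₀) y) hy0).hom
          refine ⟨x, ?_⟩
          show x ≫ (p₁ ≫ k₁) = y
          have hlift := kernel.lift_ι ph
            (homB d T (P_sub_B d T Q.unop.2) (P_sub_B d T hP₀) y) hy0
          rw [← Category.assoc, hx]
          exact homEq hlift
        · rintro ⟨x, rfl⟩
          exact (fun (x : Q.unop.obj ⟶ P₁) => (show (x ≫ (p₁ ≫ k₁)) ≫ p = 0 by
            rw [Category.assoc, Category.assoc, hk₁p, comp_zero, comp_zero])) x
    let F : Bsub d T ⥤ ModCat k T.P :=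
      ObjectProperty.ι (fun X : C => X ∈ Bcat T.K T.I (d + 1)) ⋙ resYoneda k T.P
    haveI hFaith : F.Faithful := by
      constructor
      intro Xh Yh φ φ' hφ
      obtain ⟨P₀, hP₀, p, hcov, hepi⟩ := exists_coverP d T conc Xh.obj Xh.2.1
      let φc : Xh.obj ⟶ Yh.obj := φ.hom
      let φc' : Xh.obj ⟶ Yh.obj := φ'.hom
      have h1 : p ≫ φc = p ≫ φc' :=
        congrArg (fun (η : F.obj Xh ⟶ F.obj Yh) => η.app (Opposite.op ⟨P₀, hP₀⟩) p) hφ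
      have h2 : p ≫ (φc - φc') = 0 := by
        rw [Preadditive.comp_sub, h1, sub_self]
      exact ObjectProperty.hom_ext _ (sub_eq_zero.mp (hepi Yh.obj Yh.2 _ h2))
    haveI hFull : F.Full := by
      constructor
      intro Xh Yh η
      obtain ⟨P₀, hP₀, p, hcov, hepi⟩ := exists_coverP d T conc Xh.obj Xh.2.1
      let Ph0 : Bsub d T := ⟨P₀, P_sub_B d T hP₀⟩
      let ph : Ph0 ⟶ Xh := ObjectProperty.homMk p
      haveI hEpi : Epi ph := epiCover Xh P₀ hP₀ p hepi
      let t : P₀ ⟶ Yh.obj := η.app (Opposite.op ⟨P₀, hP₀⟩) p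
      let th : Ph0 ⟶ Yh := ObjectProperty.homMk t
      obtain ⟨P₁, hP₁, p₁, hcov₁, hepi₁⟩ :=
        exists_coverP d T conc (kernel ph).obj (kernel ph).2.1
      let kι : (kernel ph).obj ⟶ P₀ := (kernel.ι ph).hom
      have hk₁p : kι ≫ p = 0 := (compZero _ _).mp (kernel.condition ph)
      have hnat0 : (p₁ ≫ kι) ≫ t = 0 := by
        have hnat := η.naturality (Quiver.Hom.op (homP d T hP₁ hP₀ (p₁ ≫ kι)))
        have hev' : η.app (Opposite.op ⟨P₁, hP₁⟩) ((p₁ ≫ kι) ≫ p)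
            = (p₁ ≫ kι) ≫ t := ConcreteCategory.congr_hom hnat p
        have hz : (p₁ ≫ kι) ≫ p = 0 := by
          rw [Category.assoc, hk₁p, comp_zero]
        rw [hz] at hev'
        rw [← hev']
        exact map_zero _
      have hk₁t : kι ≫ t = 0 := by
        apply hepi₁ Yh.obj Yh.2
        rw [← Category.assoc]
        exact hnat0
      have ht0 : kernel.ι ph ≫ th = 0 := (compZero _ _).mpr hk₁t
      refine ⟨Abelian.epiDesc ph th ht0, ?_⟩
      have hφ : p ≫ (Abelian.epiDesc ph th ht0).hom
          = t := homEq (Abelian.comp_epiDesc ph th ht0)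
      apply NatTrans.ext
      funext Q
      apply ModuleCat.hom_ext
      apply LinearMap.ext
      intro u
      obtain ⟨q, hq⟩ := hcov Q.unop.obj Q.unop.2 u
      have hnat := η.naturality (Quiver.Hom.op (homP d T Q.unop.2 hP₀ q))
      have hev : η.app Q (q ≫ p) = q ≫ t := ConcreteCategory.congr_hom hnat p
      show u ≫ (Abelian.epiDesc ph th ht0).hom = η.app Q u
      rw [← hq, hev, Category.assoc, hφ]
    let G₀ : Bsub d T ⥤ ObjectProperty.FullSubcategory (IsFinitelyPresented k T.P) :=
      ObjectProperty.lift _ F fpAll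
    haveI : G₀.EssSurj := by
      constructor
      intro Gh
      obtain ⟨P1, P0, h1, h0, f, ε, hsurj, hker⟩ := Gh.2
      let Ph1 : Bsub d T := ⟨P1, P_sub_B d T h1⟩
      let Pz0 : Bsub d T := ⟨P0, P_sub_B d T h0⟩
      let fh : Ph1 ⟶ Pz0 := ObjectProperty.homMk f
      let Xh := cokernel fh
      let c₀ : P0 ⟶ Xh.obj := (cokernel.π fh).hom
      let M := kernel (cokernel.π fh)
      let m : M.obj ⟶ P0 := (kernel.ι (cokernel.π fh)).hom
      let e : Ph1 ⟶ M := Abelian.factorThruImage fh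
      haveI hEpie : Epi e := inferInstanceAs (Epi (Abelian.factorThruImage fh))
      let ec : P1 ⟶ M.obj := e.hom
      have he : ec ≫ m = f := homEq (Abelian.image.fac fh)
      let N := kernel e
      let nι : N.obj ⟶ P1 := (kernel.ι e).hom
      have hmc : m ≫ c₀ = 0 := (compZero _ _).mp (kernel.condition (cokernel.π fh))
      have hfc : f ≫ c₀ = 0 := (compZero _ _).mp (cokernel.condition fh)
      have hne : nι ≫ ec = 0 := (compZero _ _).mp (kernel.condition e)
      have hkc1 : IsKernelIn (Bcat T.K T.I (d + 1)) m c₀ := by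
        refine ⟨hmc, fun W hW u hu => ?_⟩
        have hu' : homB d T hW (P_sub_B d T h0) u ≫ cokernel.π fh = 0 :=
          (compZero _ _).mpr hu
        refine ⟨(kernel.lift (cokernel.π fh) (homB d T hW (P_sub_B d T h0) u) hu').hom,
          homEq (kernel.lift_ι (cokernel.π fh) (homB d T hW (P_sub_B d T h0) u) hu'),
          fun v hv => ?_⟩
        have hv2 : homB d T hW M.2 v ≫ kernel.ι (cokernel.π fh) =
            kernel.lift (cokernel.π fh) (homB d T hW (P_sub_B d T h0) u) hu' ≫
              kernel.ι (cokernel.π fh) := by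
          rw [kernel.lift_ι]; exact ObjectProperty.hom_ext _ hv
        exact homEq ((cancel_mono (kernel.ι (cokernel.π fh))).mp hv2)
      have hcc1 : IsCokernelIn (Bcat T.K T.I (d + 1)) m c₀ := by
        refine ⟨hmc, fun W hW u hu => ?_⟩
        have hfu : fh ≫ homB d T (P_sub_B d T h0) hW u = 0 := by
          rw [compZero]
          show f ≫ u = 0
          rw [← he, Category.assoc, hu, comp_zero]
        refine ⟨(cokernel.desc fh (homB d T (P_sub_B d T h0) hW u) hfu).hom,
          homEq (cokernel.π_desc fh (homB d T (P_sub_B d T h0) hW u) hfu),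
          fun v hv => ?_⟩
        have hv2 : cokernel.π fh ≫ homB d T Xh.2 hW v =
            cokernel.π fh ≫ cokernel.desc fh (homB d T (P_sub_B d T h0) hW u) hfu := by
          rw [cokernel.π_desc]; exact ObjectProperty.hom_ext _ hv
        exact homEq ((cancel_epi (cokernel.π fh)).mp hv2)
      have hkc2 : IsKernelIn (Bcat T.K T.I (d + 1)) nι ec := by
        refine ⟨hne, fun W hW u hu => ?_⟩
        have hu' : homB d T hW (P_sub_B d T h1) u ≫ e = 0 :=
          (compZero _ _).mpr hu
        refine ⟨(kernel.lift e (homB d T hW (P_sub_B d T h1) u) hu').hom,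
          homEq (kernel.lift_ι e (homB d T hW (P_sub_B d T h1) u) hu'),
          fun v hv => ?_⟩
        have hv2 : homB d T hW N.2 v ≫ kernel.ι e =
            kernel.lift e (homB d T hW (P_sub_B d T h1) u) hu' ≫ kernel.ι e := by
          rw [kernel.lift_ι]; exact ObjectProperty.hom_ext _ hv
        exact homEq ((cancel_mono (kernel.ι e)).mp hv2)
      have hcc2 : IsCokernelIn (Bcat T.K T.I (d + 1)) nι ec := by
        refine ⟨hne, fun W hW u hu => ?_⟩
        have hu' : kernel.ι e ≫ homB d T (P_sub_B d T h1) hW u = 0 :=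
          (compZero _ _).mpr hu
        refine ⟨(Abelian.epiDesc e (homB d T (P_sub_B d T h1) hW u) hu').hom,
          homEq (Abelian.comp_epiDesc e (homB d T (P_sub_B d T h1) hW u) hu'),
          fun v hv => ?_⟩
        have hv2 : e ≫ homB d T M.2 hW v =
            e ≫ Abelian.epiDesc e (homB d T (P_sub_B d T h1) hW u) hu' := by
          rw [Abelian.comp_epiDesc]; exact ObjectProperty.hom_ext _ hv
        exact homEq ((cancel_epi e).mp hv2)
      obtain ⟨h₁t, hT₁⟩ := mkTri M.2 Pz0.2 Xh.2 m c₀ hkc1 hcc1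
      obtain ⟨h₂t, hT₂⟩ := mkTri N.2 Ph1.2 M.2 nι ec hkc2 hcc2
      have lift₁ : ∀ Q : C, Q ∈ T.P → ∀ u : Q ⟶ Xh.obj, ∃ y : Q ⟶ P0, y ≫ c₀ = u := by
        intro Q hQ u
        have hu3 : u ≫ h₁t = 0 :=
          hom_P_to_iterStar_shift_zero d T (d + 1) M.obj M.2.1 Q hQ 1 le_rfl _
        obtain ⟨y, hy⟩ := Triangle.coyoneda_exact₃ _ hT₁ u hu3
        exact ⟨y, hy.symm⟩
      have lift₂ : ∀ Q : C, Q ∈ T.P → ∀ v : Q ⟶ M.obj, ∃ x : Q ⟶ P1,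
          x ≫ ec = v := by
        intro Q hQ v
        have hv3 : v ≫ h₂t = 0 :=
          hom_P_to_iterStar_shift_zero d T (d + 1) N.obj N.2.1 Q hQ 1 le_rfl _
        obtain ⟨x, hx⟩ := Triangle.coyoneda_exact₃ _ hT₂ v hv3
        exact ⟨x, hx.symm⟩
      have kerfac : ∀ Q : C, Q ∈ T.P → ∀ y : Q ⟶ P0, y ≫ c₀ = 0 →
          ∃ x : Q ⟶ P1, x ≫ f = y := by
        intro Q hQ y hy
        have hy' : homB d T (P_sub_B d T hQ) (P_sub_B d T h0) y ≫ cokernel.π fh = 0 :=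
          (compZero _ _).mpr hy
        obtain ⟨x, hx⟩ := lift₂ Q hQ
          (kernel.lift (cokernel.π fh) (homB d T (P_sub_B d T hQ) (P_sub_B d T h0) y) hy').hom
        refine ⟨x, ?_⟩
        have hlift := kernel.lift_ι (cokernel.π fh)
          (homB d T (P_sub_B d T hQ) (P_sub_B d T h0) y) hy'
        rw [← he, ← Category.assoc, hx]
        exact homEq hlift
      have keyW : ∀ (Q : (ObjectProperty.FullSubcategory fun Z : C => Z ∈ T.P)ᵒᵖ)
          (y y' : Q.unop.obj ⟶ P0),
          ε.app Q y = ε.app Q y' → y ≫ c₀ = y' ≫ c₀ := by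
        intro Q y y' hyy
        have h0' : ε.app Q (y - y') = 0 :=
          (map_sub (ConcreteCategory.hom (ε.app Q)) y y').trans (sub_eq_zero.mpr hyy)
        obtain ⟨x, hx⟩ : ∃ x : Q.unop.obj ⟶ P1, ((resYoneda k T.P).map f).app Q x = y - y' :=
          (hker Q (y - y')).mp h0'
        have hx' : x ≫ f = y - y' := hx
        have hz : (y - y') ≫ c₀ = 0 := by rw [← hx', Category.assoc, hfc, comp_zero]
        rw [Preadditive.sub_comp] at hz
        exact sub_eq_zero.mp hz
      choose liftG hliftG using fun (Q : (ObjectProperty.FullSubcategory fun Z : C => Z ∈ T.P)ᵒᵖ)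
        (g : (Gh.1).obj Q) => hsurj Q g
      let τf : ∀ Q : (ObjectProperty.FullSubcategory fun Z : C => Z ∈ T.P)ᵒᵖ,
          (Gh.1).obj Q → (Q.unop.obj ⟶ Xh.obj) := fun Q g => liftG Q g ≫ c₀
      have τadd : ∀ Q g g', τf Q (g + g') = τf Q g + τf Q g' := by
        intro Q g g'
        have h2 : ε.app Q (liftG Q (g + g')) = ε.app Q (liftG Q g + liftG Q g') := by
          rw [map_add, hliftG, hliftG, hliftG]
        have h3 := keyW Q _ _ h2
        show liftG Q (g + g') ≫ c₀ = liftG Q g ≫ c₀ + liftG Q g' ≫ c₀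
        rw [h3]
        exact (fun (a b : Q.unop.obj ⟶ P0) => (show (a + b) ≫ c₀ = a ≫ c₀ + b ≫ c₀ by
          rw [Preadditive.add_comp])) (liftG Q g) (liftG Q g')
      have τsmul : ∀ (Q) (r : k) (g), τf Q (r • g) = r • τf Q g := by
        intro Q r g
        have h2 : ε.app Q (liftG Q (r • g)) = ε.app Q (r • liftG Q g) := by
          rw [map_smul, hliftG, hliftG]
        have h3 := keyW Q _ _ h2
        show liftG Q (r • g) ≫ c₀ = r • (liftG Q g ≫ c₀)
        rw [h3]
        exact (fun (a : Q.unop.obj ⟶ P0) => (show (r • a) ≫ c₀ = r • (a ≫ c₀) by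
          rw [Linear.smul_comp])) (liftG Q g)
      let τ : ∀ Q, (Gh.1).obj Q →ₗ[k] (Q.unop.obj ⟶ Xh.obj) := fun Q =>
        { toFun := τf Q, map_add' := τadd Q, map_smul' := τsmul Q }
      have τbij : ∀ Q, Function.Bijective (τ Q) := by
        intro Q
        constructor
        · intro g g' hgg
          have hsub : τf Q (g - g') = 0 := by
            have h4 : (τ Q) (g - g') = 0 := by rw [map_sub, hgg, sub_self]
            exact h4
          obtain ⟨x, hx⟩ := kerfac Q.unop.obj Q.unop.2 (liftG Q (g - g')) hsub
          have hz : ε.app Q (liftG Q (g - g')) = 0 := (hker Q _).mpr ⟨x, hx⟩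
          rw [hliftG] at hz
          exact sub_eq_zero.mp hz
        · intro u
          obtain ⟨y, hy⟩ := lift₁ Q.unop.obj Q.unop.2 u
          refine ⟨ε.app Q y, ?_⟩
          have h2 : ε.app Q (liftG Q (ε.app Q y)) = ε.app Q y := hliftG _ _
          have h3 := keyW Q _ _ h2
          show liftG Q (ε.app Q y) ≫ c₀ = u
          rw [h3, hy]
      have τnat : ∀ (Q Q' : (ObjectProperty.FullSubcategory fun Z : C => Z ∈ T.P)ᵒᵖ) (r : Q ⟶ Q')
          (g : (Gh.1).obj Q), τf Q' ((Gh.1).map r g) =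
            ((resYoneda k T.P).obj Xh.obj).map r (τf Q g) := by
        intro Q Q' r g
        let ru : Q'.unop.obj ⟶ Q.unop.obj := r.unop.hom
        have hnatε' : ε.app Q' (ru ≫ liftG Q g) =
            (Gh.1).map r (ε.app Q (liftG Q g)) := ConcreteCategory.congr_hom (ε.naturality r) (liftG Q g)
        rw [hliftG] at hnatε'
        have h2 : ε.app Q' (liftG Q' ((Gh.1).map r g)) =
            ε.app Q' (ru ≫ liftG Q g) := by
          rw [hliftG, hnatε']
        have h3 := keyW Q' _ _ h2
        show liftG Q' ((Gh.1).map r g) ≫ c₀ = _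
        rw [h3]
        exact (fun (a : Q.unop.obj ⟶ P0) => (show (ru ≫ a) ≫ c₀ = ru ≫ (a ≫ c₀) by
          rw [Category.assoc])) (liftG Q g)
      let η : Gh.1 ≅ (resYoneda k T.P).obj Xh.obj := NatIso.ofComponents
        (fun Q => (LinearEquiv.ofBijective (τ Q) (τbij Q)).toModuleIso)
        (by
          intro Q Q' r
          apply ModuleCat.hom_ext
          apply LinearMap.ext
          intro g
          exact τnat Q Q' r g)
      exact ⟨Xh, ⟨ObjectProperty.isoMk _ η.symm⟩⟩
    haveI : G₀.Faithful := inferInstance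
    haveI : G₀.Full := inferInstance
    haveI : G₀.IsEquivalence := {}
    refine ⟨G₀.asEquivalence, ⟨Iso.refl _⟩, ?_⟩
    intro X E Y f g h hX hE hY hT
    obtain ⟨hker', hcoker'⟩ := ofTri f g h hX hE hY hT
    intro Q
    refine ⟨?_, ?_, ?_⟩
    · intro (x : Q.unop.obj ⟶ X) (x' : Q.unop.obj ⟶ X) hxx
      have hxx' : x ≫ f = x' ≫ f := hxx
      have hsub : (x - x') ≫ f = 0 := by rw [Preadditive.sub_comp, hxx', sub_self]
      obtain ⟨v, hv, huniq⟩ := hker'.2 Q.unop.obj (P_sub_B d T Q.unop.2)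
        (0 : Q.unop.obj ⟶ E) zero_comp
      have e1 := huniq (x - x') hsub
      have e2 := huniq 0 zero_comp
      exact sub_eq_zero.mp (e1.trans e2.symm)
    · intro y
      have h3 : y ≫ h = 0 :=
        hom_P_to_iterStar_shift_zero d T (d + 1) X hX.1 Q.unop.obj Q.unop.2 1 le_rfl _
      obtain ⟨x, hx⟩ := Triangle.coyoneda_exact₃ _ hT y h3
      exact ⟨x, hx.symm⟩
    · intro y hy
      have hy' : y ≫ g = 0 := hy
      obtain ⟨v, hv, _⟩ := hker'.2 Q.unop.obj (P_sub_B d T Q.unop.2) y hy'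
      exact ⟨v, hv⟩

end PaperIS
end
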